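/- arXiv:1706.04081 — 4 statements merged into one kernel-verified Lean document; each statement's English description precedes it below -/
import Mathlib

section
/- Let φ ∈ [0,1]. Define L(γ) = (γ/2 + γ(1-γ))^{φ} · (γ/2 + (1-γ)²)^{1-φ} interpreted via h(γ) = φ·log(γ/2 + γ(1-γ)) + (1-φ)·log(γ/2 + (1-γ)²) on (0,1). If φ ≥ 9/16 then γ = 3/4 maximizes L over [0,1]; if φ < 9/16 then γ = (3 - √(9 - 16φ))/4 maximizes L over [0,1]. -/
/-- Fully relaxed per-sample likelihood for the binary anomaly-detection model:
`L(γ) = (γ/2 + γ(1-γ))^φ · (γ/2 + (1-γ)²)^(1-φ)` (real-exponent powers). -/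
noncomputable def LfrBin (φ γ : ℝ) : ℝ :=
  (γ / 2 + γ * (1 - γ)) ^ φ * (γ / 2 + (1 - γ) ^ 2) ^ (1 - φ)

lemma key_ineq (p a c : ℝ) (hp0 : 0 ≤ p) (hp1 : p ≤ 1) (ha0 : 0 ≤ a) (ha1 : a ≤ 1)
    (hc0 : 0 < c) (hc1 : c < 1) (h : (a - c) * (p - c) ≤ 0) :
    a ^ p * (1 - a) ^ (1 - p) ≤ c ^ p * (1 - c) ^ (1 - p) := by
  have hc1' : (0:ℝ) < 1 - c := by linarith
  have ha1' : (0:ℝ) ≤ 1 - a := by linarith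
  have amgm := Real.geom_mean_le_arith_mean2_weighted hp0 (by linarith : (0:ℝ) ≤ 1 - p)
    (div_nonneg ha0 hc0.le) (div_nonneg ha1' hc1'.le) (by ring)
  have h2 : p * (a / c) + (1 - p) * ((1 - a) / (1 - c)) ≤ 1 := by
    rw [show p * (a / c) + (1 - p) * ((1 - a) / (1 - c)) = p * a / c + (1 - p) * (1 - a) / (1 - c) by ring,
      div_add_div _ _ (ne_of_gt hc0) (ne_of_gt hc1'), div_le_one (by positivity)]
    nlinarith
  have h3 : (a / c) ^ p * ((1 - a) / (1 - c)) ^ (1 - p) ≤ 1 := le_trans amgm h2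
  have hrw : (a / c) ^ p * ((1 - a) / (1 - c)) ^ (1 - p)
      = (a ^ p * (1 - a) ^ (1 - p)) / (c ^ p * (1 - c) ^ (1 - p)) := by
    rw [Real.div_rpow ha0 hc0.le, Real.div_rpow ha1' hc1'.le]
    ring
  rw [hrw, div_le_one (by positivity)] at h3
  linarith

lemma lfr_eq (φ γ : ℝ) : LfrBin φ γ
    = (γ / 2 + γ * (1 - γ)) ^ φ * (1 - (γ / 2 + γ * (1 - γ))) ^ (1 - φ) := by
  unfold LfrBin
  congr 2
  ring

lemma A_mem {γ : ℝ} (h0 : 0 ≤ γ) (h1 : γ ≤ 1) :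
    0 ≤ γ / 2 + γ * (1 - γ) ∧ γ / 2 + γ * (1 - γ) ≤ 9 / 16 := by
  constructor
  · nlinarith
  · nlinarith [sq_nonneg (3 - 4 * γ)]

theorem stmt_0 (φ : ℝ) (hφ : φ ∈ Set.Icc (0 : ℝ) 1) :
    (φ ≥ 9 / 16 → ∀ γ ∈ Set.Icc (0 : ℝ) 1, LfrBin φ γ ≤ LfrBin φ (3 / 4)) ∧
    (φ < 9 / 16 → ∀ γ ∈ Set.Icc (0 : ℝ) 1,
      LfrBin φ γ ≤ LfrBin φ ((3 - Real.sqrt (9 - 16 * φ)) / 4)) := by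
  obtain ⟨hφ0, hφ1⟩ := hφ
  constructor
  · intro h9 γ hγ
    obtain ⟨hγ0, hγ1⟩ := hγ
    obtain ⟨hA0, hA1⟩ := A_mem hγ0 hγ1
    rw [lfr_eq, lfr_eq]
    have e1 : (3:ℝ) / 4 / 2 + 3 / 4 * (1 - 3 / 4) = 9 / 16 := by norm_num
    rw [e1]
    exact key_ineq φ _ (9/16) hφ0 hφ1 hA0 (by linarith) (by norm_num) (by norm_num)
      (mul_nonpos_of_nonpos_of_nonneg (by linarith) (by linarith))
  · intro h9 γ hγ
    obtain ⟨hγ0, hγ1⟩ := hγ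
    obtain ⟨hA0, hA1⟩ := A_mem hγ0 hγ1
    rcases eq_or_lt_of_le hφ0 with hφ0' | hφ0'
    · -- φ = 0
      subst hφ0'
      have : Real.sqrt (9 - 16 * 0) = 3 := by
        rw [show (9:ℝ) - 16 * 0 = 3 ^ 2 by norm_num, Real.sqrt_sq (by norm_num)]
      rw [this, lfr_eq, lfr_eq]
      norm_num [Real.rpow_zero, Real.rpow_one]
      linarith
    · -- 0 < φ < 9/16
      set s := Real.sqrt (9 - 16 * φ) with hs
      have hs2 : s ^ 2 = 9 - 16 * φ := Real.sq_sqrt (by linarith)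
      have hs0 : 0 ≤ s := Real.sqrt_nonneg _
      have hs3 : s < 3 := by nlinarith
      have eA : (3 - s) / 4 / 2 + (3 - s) / 4 * (1 - (3 - s) / 4) = φ := by
        field_simp
        nlinarith
      rw [lfr_eq, lfr_eq, eA]
      exact key_ineq φ _ φ hφ0 hφ1 hA0 (by linarith) hφ0' (by linarith)
        (by ring_nf; nlinarith)
end

section
/- Let (A_t), (B_t), (C_t) be real sequences with B_t ≥ 0 for all t, A_{t+1} ≤ A_t - B_t + C_t for all t, and ∑_{t=0}^∞ C_t convergent (absolutely summable). Then either A_t → -∞, or A_t converges to a finite limit and ∑_{t=0}^∞ B_t < ∞. -/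
open Filter

theorem stmt_3 (A B C : ℕ → ℝ) (hB : ∀ t, 0 ≤ B t)
    (hrec : ∀ t, A (t + 1) ≤ A t - B t + C t)
    (hC : Summable fun t => |C t|) :
    Tendsto A atTop atBot ∨
      ((∃ a : ℝ, Tendsto A atTop (nhds a)) ∧ Summable B) := by
  set S : ℕ → ℝ := fun t => ∑ i ∈ Finset.range t, C i with hS
  set D : ℕ → ℝ := fun t => A t - S t with hD
  have hCsum : Summable C := hC.of_abs
  have hSt : Tendsto S atTop (nhds (∑' i, C i)) := hCsum.hasSum.tendsto_sum_nat
  have hAeq : A = fun t => D t + S t := by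
    funext t; simp [hD]
  have hDrec : ∀ t, D (t + 1) ≤ D t - B t := by
    intro t
    have := hrec t
    simp only [hD, hS, Finset.sum_range_succ]
    linarith
  have hanti : Antitone D := by
    apply antitone_nat_of_succ_le
    intro t
    have := hDrec t
    have := hB t
    linarith
  have hDsum : ∀ n, D n ≤ D 0 - ∑ i ∈ Finset.range n, B i := by
    intro n
    induction n with
    | zero => simp
    | succ n ih =>
      have := hDrec n
      rw [Finset.sum_range_succ]
      linarith
  by_cases hbdd : BddBelow (Set.range D)
  · right
    have hDt : Tendsto D atTop (nhds (⨅ i, D i)) := tendsto_atTop_ciInf hanti hbdd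
    constructor
    · exact ⟨(⨅ i, D i) + ∑' i, C i, by rw [hAeq]; exact hDt.add hSt⟩
    · obtain ⟨b, hb⟩ := hbdd
      apply summable_of_sum_range_le hB (c := D 0 - b)
      intro n
      have h1 := hDsum n
      have h2 : b ≤ D n := hb ⟨n, rfl⟩
      linarith
  · left
    have hDbot : Tendsto D atTop atBot := by
      rw [tendsto_atBot]
      intro b
      rw [not_bddBelow_iff] at hbdd
      obtain ⟨x, ⟨⟨N, rfl⟩, hxb⟩⟩ := hbdd b
      exact eventually_atTop.2 ⟨N, fun n hn => le_trans (hanti hn) hxb.le⟩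
    rw [hAeq]
    have h1 : Tendsto (fun t => D t + (∑' i, C i + 1)) atTop atBot :=
      tendsto_atBot_add_const_right _ _ hDbot
    apply tendsto_atBot_mono' _ _ h1
    filter_upwards [hSt.eventually (eventually_le_nhds (by linarith : (∑' i, C i) < ∑' i, C i + 1))] with t ht
    linarith
end

section
/- Let S ⊆ ℝ^d be compact convex, f differentiable with L-Lipschitz and bounded gradient on S, 0 < α < 2/L. Consider a sequence z^{t+1} = proj_S(z^t - α (∇f(z^t) + e_t)) with z^0 ∈ S and error terms satisfying ‖e_t‖ ≤ C d^t for some C > 0 and d ∈ [0,1). Then every limit point ẑ of (z^t) satisfies ẑ = proj_S(ẑ - α ∇f(ẑ)), i.e., ẑ is a stationary point of f over S. -/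
open scoped InnerProductSpace
open Filter Topology

open InnerProductSpace intervalIntegral in
lemma descent_aux {dim : ℕ} {S : Set (EuclideanSpace ℝ (Fin dim))} (hconv : Convex ℝ S)
    {f : EuclideanSpace ℝ (Fin dim) → ℝ} (hf : Differentiable ℝ f) {L : ℝ} (hL : 0 ≤ L)
    (hlip : ∀ x ∈ S, ∀ y ∈ S, ‖gradient f x - gradient f y‖ ≤ L * ‖x - y‖)
    {x y : EuclideanSpace ℝ (Fin dim)} (hx : x ∈ S) (hy : y ∈ S) :
    f y ≤ f x + ⟪gradient f x, y - x⟫_ℝ + L / 2 * ‖y - x‖ ^ 2 := by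
  set c : ℝ → EuclideanSpace ℝ (Fin dim) := fun s => x + s • (y - x) with hc_def
  have hc : ∀ s : ℝ, HasDerivAt c (y - x) s := by
    intro s
    simpa [c] using ((hasDerivAt_id s).smul_const (y - x)).const_add x
  have hmem : ∀ s ∈ Set.Icc (0:ℝ) 1, c s ∈ S := fun s hs =>
    hconv.add_smul_sub_mem hx hy hs
  set ψ : ℝ → ℝ := fun s => ⟪gradient f (c s), y - x⟫_ℝ with hψ_def
  have hderiv : ∀ s : ℝ, HasDerivAt (fun s => f (c s)) (ψ s) s := by
    intro s
    have h1 := ((hf (c s)).hasGradientAt.hasFDerivAt.comp_hasDerivAt s (hc s))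
    simpa [ψ, InnerProductSpace.toDual_apply_apply, Function.comp_def] using h1
  have hlipψ : ∀ s ∈ Set.Icc (0:ℝ) 1, ∀ s' ∈ Set.Icc (0:ℝ) 1,
      |ψ s - ψ s'| ≤ (L * ‖y - x‖ ^ 2) * |s - s'| := by
    intro s hs s' hs'
    have h1 : ψ s - ψ s' = ⟪gradient f (c s) - gradient f (c s'), y - x⟫_ℝ := by
      simp [ψ, inner_sub_left]
    rw [h1]
    calc |⟪gradient f (c s) - gradient f (c s'), y - x⟫_ℝ|
        ≤ ‖gradient f (c s) - gradient f (c s')‖ * ‖y - x‖ := abs_real_inner_le_norm _ _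
      _ ≤ (L * ‖c s - c s'‖) * ‖y - x‖ := by
          gcongr; exact hlip _ (hmem s hs) _ (hmem s' hs')
      _ = (L * ‖y - x‖ ^ 2) * |s - s'| := by
          have : c s - c s' = (s - s') • (y - x) := by
            simp [c, sub_smul]
          rw [this, norm_smul, Real.norm_eq_abs]
          ring_nf
  have hcont : ContinuousOn ψ (Set.Icc (0:ℝ) 1) := by
    apply LipschitzOnWith.continuousOn (K := Real.toNNReal (L * ‖y - x‖ ^ 2))
    rw [lipschitzOnWith_iff_dist_le_mul]
    intro a ha b hb
    rw [Real.dist_eq, Real.dist_eq]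
    calc |ψ a - ψ b| ≤ (L * ‖y - x‖ ^ 2) * |a - b| := hlipψ a ha b hb
      _ ≤ Real.toNNReal (L * ‖y - x‖ ^ 2) * |a - b| := by
          gcongr; exact Real.le_coe_toNNReal _
  have hint : IntervalIntegrable ψ MeasureTheory.volume 0 1 := by
    apply ContinuousOn.intervalIntegrable
    rwa [Set.uIcc_of_le (by norm_num : (0:ℝ) ≤ 1)]
  have hftc : ∫ s in (0:ℝ)..1, ψ s = f (c 1) - f (c 0) :=
    intervalIntegral.integral_eq_sub_of_hasDerivAt (fun s _ => hderiv s) hint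
  have hc1 : c 1 = y := by simp [c]
  have hc0 : c 0 = x := by simp [c]
  have hψ0 : ψ 0 = ⟪gradient f x, y - x⟫_ℝ := by simp [ψ, hc0]
  -- bound the integral
  have hmono : ∫ s in (0:ℝ)..1, ψ s ≤ ∫ s in (0:ℝ)..1, (ψ 0 + (L * ‖y - x‖ ^ 2) * s) := by
    apply intervalIntegral.integral_mono_on (by norm_num) hint
    · apply IntervalIntegrable.add intervalIntegrable_const
      apply ContinuousOn.intervalIntegrable
      exact (continuous_const.mul continuous_id).continuousOn
    · intro s hs
      have h1 := hlipψ s hs 0 (by norm_num)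
      have h2 : ψ s - ψ 0 ≤ (L * ‖y - x‖ ^ 2) * s := by
        have := (abs_le.mp h1).2
        rwa [sub_zero, abs_of_nonneg hs.1] at this
      linarith
  have hval : ∫ s in (0:ℝ)..1, (ψ 0 + (L * ‖y - x‖ ^ 2) * s)
      = ψ 0 + L / 2 * ‖y - x‖ ^ 2 := by
    rw [intervalIntegral.integral_add intervalIntegrable_const]
    · rw [intervalIntegral.integral_const_mul, integral_id, intervalIntegral.integral_const]
      simp; ring
    · apply ContinuousOn.intervalIntegrable
      exact (continuous_const.mul continuous_id).continuousOn
  rw [hc1, hc0] at hftc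
  nlinarith [hftc, hmono, hval, hψ0]

lemma proj_inner' {dim : ℕ} {S : Set (EuclideanSpace ℝ (Fin dim))} (hconv : Convex ℝ S)
    {P : EuclideanSpace ℝ (Fin dim) → EuclideanSpace ℝ (Fin dim)}
    (hP : ∀ x, P x ∈ S ∧ ∀ w ∈ S, ‖x - P x‖ ≤ ‖x - w‖)
    (x : EuclideanSpace ℝ (Fin dim)) {w : EuclideanSpace ℝ (Fin dim)} (hw : w ∈ S) :
    ⟪x - P x, w - P x⟫_ℝ ≤ 0 := by
  haveI : Nonempty S := ⟨⟨P x, (hP x).1⟩⟩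
  have hiInf : ‖x - P x‖ = ⨅ w : S, ‖x - w‖ := by
    apply le_antisymm
    · exact le_ciInf fun w => (hP x).2 w w.2
    · have hbd : BddBelow (Set.range fun w : S => ‖x - (w : EuclideanSpace ℝ (Fin dim))‖) :=
        ⟨0, fun _ ⟨_, h⟩ => h ▸ norm_nonneg _⟩
      exact ciInf_le hbd (⟨P x, (hP x).1⟩ : S)
  exact (norm_eq_iInf_iff_real_inner_le_zero hconv (hP x).1).mp hiInf w hw

lemma proj_nonexp' {dim : ℕ} {S : Set (EuclideanSpace ℝ (Fin dim))} (hconv : Convex ℝ S)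
    {P : EuclideanSpace ℝ (Fin dim) → EuclideanSpace ℝ (Fin dim)}
    (hP : ∀ x, P x ∈ S ∧ ∀ w ∈ S, ‖x - P x‖ ≤ ‖x - w‖)
    (x y : EuclideanSpace ℝ (Fin dim)) : ‖P x - P y‖ ≤ ‖x - y‖ := by
  have h1 := proj_inner' hconv hP x (hP y).1
  have h2 := proj_inner' hconv hP y (hP x).1
  have h1' : 0 ≤ ⟪x - P x, P x - P y⟫_ℝ := by
    have hr : P y - P x = -(P x - P y) := by abel
    rw [hr, inner_neg_right] at h1
    linarith
  have hsplit : ⟪x - y, P x - P y⟫_ℝ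
      = ⟪x - P x, P x - P y⟫_ℝ - ⟪y - P y, P x - P y⟫_ℝ
        + ⟪P x - P y, P x - P y⟫_ℝ := by
    simp only [inner_sub_left]; ring
  have hself : ⟪P x - P y, P x - P y⟫_ℝ = ‖P x - P y‖ ^ 2 :=
    real_inner_self_eq_norm_sq _
  have hcs : ⟪x - y, P x - P y⟫_ℝ ≤ ‖x - y‖ * ‖P x - P y‖ := real_inner_le_norm _ _
  nlinarith [norm_nonneg (P x - P y), norm_nonneg (x - y)]

theorem stmt_6 {dim : ℕ} (S : Set (EuclideanSpace ℝ (Fin dim))) (hS : S.Nonempty)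
    (hconv : Convex ℝ S) (hcomp : IsCompact S)
    (f : EuclideanSpace ℝ (Fin dim) → ℝ) (hf : Differentiable ℝ f)
    (L : ℝ) (hL : 0 < L)
    (hlip : ∀ x ∈ S, ∀ y ∈ S, ‖gradient f x - gradient f y‖ ≤ L * ‖x - y‖)
    (M : ℝ) (hbdd : ∀ x ∈ S, ‖gradient f x‖ ≤ M)
    (α : ℝ) (hα : 0 < α) (hα2 : α < 2 / L)
    (P : EuclideanSpace ℝ (Fin dim) → EuclideanSpace ℝ (Fin dim))
    (hP : ∀ x, P x ∈ S ∧ ∀ w ∈ S, ‖x - P x‖ ≤ ‖x - w‖)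
    (e : ℕ → EuclideanSpace ℝ (Fin dim)) (C d : ℝ) (hC : 0 < C)
    (hd : d ∈ Set.Ico (0 : ℝ) 1) (he : ∀ t, ‖e t‖ ≤ C * d ^ t)
    (z : ℕ → EuclideanSpace ℝ (Fin dim)) (hz0 : z 0 ∈ S)
    (hiter : ∀ t, z (t + 1) = P (z t - α • (gradient f (z t) + e t)))
    (zh : EuclideanSpace ℝ (Fin dim)) (hcluster : MapClusterPt zh Filter.atTop z) :
    zh = P (zh - α • gradient f zh) := by
  obtain ⟨hd0, hd1⟩ := hd
  -- iterates stay in S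
  have hzS : ∀ t, z t ∈ S := by
    intro t
    induction t with
    | zero => exact hz0
    | succ n _ => rw [hiter n]; exact (hP _).1
  -- diameter bound
  obtain ⟨D, hD⟩ : ∃ D, ∀ a ∈ S, ∀ b ∈ S, ‖a - b‖ ≤ D := by
    obtain ⟨D, hD⟩ := Metric.isBounded_iff.mp hcomp.isBounded
    exact ⟨D, fun a ha b hb => by rw [← dist_eq_norm]; exact hD ha hb⟩
  have hD0 : 0 ≤ D := by
    obtain ⟨a, ha⟩ := hS
    have := hD a ha a ha
    simpa using this
  -- minimum of f on S
  obtain ⟨xm, hxmS, hxm⟩ := hcomp.exists_isMinOn hS hf.continuous.continuousOn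
  -- step constant
  set κ : ℝ := 1 / α - L / 2 with hκdef
  clear_value κ
  have hκ : 0 < κ := by
    have h1 : α * L < 2 := (lt_div_iff₀ hL).mp hα2
    have h2 : L / 2 < 1 / α := by
      rw [div_lt_div_iff₀ (by norm_num) hα]
      nlinarith
    rw [hκdef]
    linarith
  -- key descent inequality per step
  have key : ∀ t, f (z (t + 1)) ≤ f (z t) - κ * ‖z (t + 1) - z t‖ ^ 2 + C * d ^ t * D := by
    intro t
    set a := z t with ha
    set b := z (t + 1) with hb
    set gt := gradient f a with hgt
    have haS : a ∈ S := hzS t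
    have hbS : b ∈ S := hzS (t + 1)
    have hVI : ⟪(a - α • (gt + e t)) - b, a - b⟫_ℝ ≤ 0 := by
      have := proj_inner' hconv hP (a - α • (gt + e t)) haS
      rwa [← hiter t, ← hb] at this
    have hexp : ⟪(a - α • (gt + e t)) - b, a - b⟫_ℝ
        = ‖a - b‖ ^ 2 - α * ⟪gt + e t, a - b⟫_ℝ := by
      have hrw : (a - α • (gt + e t)) - b = (a - b) - α • (gt + e t) := by abel
      rw [hrw, inner_sub_left, real_inner_smul_left, real_inner_self_eq_norm_sq]
    have hsplit : ⟪gt + e t, a - b⟫_ℝ = ⟪gt, a - b⟫_ℝ + ⟪e t, a - b⟫_ℝ :=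
      inner_add_left _ _ _
    have hstep : ‖a - b‖ ^ 2 ≤ α * (⟪gt, a - b⟫_ℝ + ⟪e t, a - b⟫_ℝ) := by
      rw [hexp, hsplit] at hVI; linarith
    have hdesc : f b ≤ f a + ⟪gt, b - a⟫_ℝ + L / 2 * ‖b - a‖ ^ 2 :=
      descent_aux hconv hf hL.le hlip haS hbS
    have hng : ⟪gt, b - a⟫_ℝ = -⟪gt, a - b⟫_ℝ := by
      have : b - a = -(a - b) := by abel
      rw [this, inner_neg_right]
    have hnorm : ‖b - a‖ = ‖a - b‖ := norm_sub_rev _ _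
    have hie : ⟪e t, a - b⟫_ℝ ≤ ‖e t‖ * ‖a - b‖ := real_inner_le_norm _ _
    have hieD : ‖e t‖ * ‖a - b‖ ≤ C * d ^ t * D := by
      have h1 := he t
      have h2 := hD a haS b hbS
      have h3 : (0:ℝ) ≤ C * d ^ t := by positivity
      exact mul_le_mul h1 h2 (norm_nonneg _) h3
    have hdiv : ‖a - b‖ ^ 2 / α ≤ ⟪gt, a - b⟫_ℝ + ⟪e t, a - b⟫_ℝ :=
      (div_le_iff₀ hα).mpr (by linarith [hstep])
    have hring : κ * ‖a - b‖ ^ 2 = ‖a - b‖ ^ 2 / α - L / 2 * ‖a - b‖ ^ 2 := by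
      rw [hκdef]; ring
    rw [hng, hnorm] at hdesc
    have hΔ : ‖b - a‖ = ‖a - b‖ := norm_sub_rev _ _
    calc f b ≤ f a - ⟪gt, a - b⟫_ℝ + L / 2 * ‖a - b‖ ^ 2 := by linarith
      _ ≤ f a - (‖a - b‖ ^ 2 / α - ⟪e t, a - b⟫_ℝ) + L / 2 * ‖a - b‖ ^ 2 := by linarith
      _ ≤ f a - κ * ‖a - b‖ ^ 2 + C * d ^ t * D := by linarith
      _ = f a - κ * ‖b - a‖ ^ 2 + C * d ^ t * D := by rw [hΔ]
  -- telescoping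
  have tele : ∀ n, f (z n) + κ * ∑ t ∈ Finset.range n, ‖z (t + 1) - z t‖ ^ 2
      ≤ f (z 0) + ∑ t ∈ Finset.range n, C * d ^ t * D := by
    intro n
    induction n with
    | zero => simp
    | succ n ih =>
      rw [Finset.sum_range_succ, Finset.sum_range_succ]
      have := key n
      linarith
  have hgeom : ∀ n, ∑ t ∈ Finset.range n, C * d ^ t * D ≤ C * D * (1 / (1 - d)) := by
    intro n
    have h1d : (0:ℝ) < 1 - d := by linarith
    have hsum : ∑ t ∈ Finset.range n, d ^ t = (1 - d ^ n) / (1 - d) := by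
      rw [geom_sum_eq (by intro h; rw [h] at hd1; exact lt_irrefl 1 hd1 : d ≠ 1) n,
        div_eq_div_iff (by intro h; apply lt_irrefl (0:ℝ); nlinarith : d - 1 ≠ 0)
          (by positivity : (1:ℝ) - d ≠ 0)]
      ring
    have hle : ∑ t ∈ Finset.range n, d ^ t ≤ 1 / (1 - d) := by
      rw [hsum]
      gcongr
      · have : (0:ℝ) ≤ d ^ n := by positivity
        linarith
    calc ∑ t ∈ Finset.range n, C * d ^ t * D = C * D * ∑ t ∈ Finset.range n, d ^ t := by
          rw [Finset.mul_sum]; exact Finset.sum_congr rfl fun t _ => by ring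
      _ ≤ C * D * (1 / (1 - d)) := by
          have : (0:ℝ) ≤ C * D := by positivity
          exact mul_le_mul_of_nonneg_left hle this
  -- summability of squared increments
  have hsummable : Summable (fun t => ‖z (t + 1) - z t‖ ^ 2) := by
    apply summable_of_sum_range_le (c := (f (z 0) - f xm + C * D * (1 / (1 - d))) / κ)
      (fun t => by positivity)
    intro n
    rw [le_div_iff₀ hκ]
    have h1 := tele n
    have h2 := hgeom n
    have h3 : f xm ≤ f (z n) := hxm (hzS n)
    have h4 : (∑ t ∈ Finset.range n, ‖z (t + 1) - z t‖ ^ 2) * κ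
        = κ * ∑ t ∈ Finset.range n, ‖z (t + 1) - z t‖ ^ 2 := mul_comm _ _
    rw [h4]
    linarith
  have hΔsq : Tendsto (fun t => ‖z (t + 1) - z t‖ ^ 2) atTop (𝓝 0) :=
    hsummable.tendsto_atTop_zero
  have hΔ0 : Tendsto (fun t => ‖z (t + 1) - z t‖) atTop (𝓝 0) := by
    have h := hΔsq.sqrt
    simp only [Real.sqrt_zero] at h
    convert h using 2 with t
    · exact (Real.sqrt_sq (norm_nonneg _)).symm
  have hΔvec : Tendsto (fun t => z (t + 1) - z t) atTop (𝓝 0) :=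
    tendsto_zero_iff_norm_tendsto_zero.mpr hΔ0
  -- extract subsequence converging to zh
  obtain ⟨φ, hφmono, hφconv⟩ :=
    TopologicalSpace.FirstCountableTopology.tendsto_subseq hcluster
  have hφtop : Tendsto φ atTop atTop := hφmono.tendsto_atTop
  -- zh ∈ S
  have hzhS : zh ∈ S :=
    hcomp.isClosed.mem_of_tendsto hφconv (Eventually.of_forall fun k => hzS (φ k))
  -- gradient converges along subsequence
  have hgrad : Tendsto (fun k => gradient f (z (φ k))) atTop (𝓝 (gradient f zh)) := by
    rw [tendsto_iff_norm_sub_tendsto_zero]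
    apply squeeze_zero (fun k => norm_nonneg _)
      (fun k => hlip _ (hzS (φ k)) _ hzhS)
    have h1 : Tendsto (fun k => z (φ k) - zh) atTop (𝓝 0) := by
      simpa using hφconv.sub (tendsto_const_nhds (x := zh))
    have h2 : Tendsto (fun k => ‖z (φ k) - zh‖) atTop (𝓝 0) :=
      tendsto_zero_iff_norm_tendsto_zero.mp h1
    simpa using h2.const_mul L
  -- error converges to 0
  have herr : Tendsto e atTop (𝓝 0) := by
    rw [tendsto_zero_iff_norm_tendsto_zero]
    apply squeeze_zero (fun t => norm_nonneg _) he
    have := tendsto_pow_atTop_nhds_zero_of_lt_one hd0 hd1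
    simpa using this.const_mul C
  have herrφ : Tendsto (fun k => e (φ k)) atTop (𝓝 0) := herr.comp hφtop
  -- the argument of the projection converges
  set ystar := zh - α • gradient f zh with hystar
  have hyconv : Tendsto (fun k => z (φ k) - α • (gradient f (z (φ k)) + e (φ k)))
      atTop (𝓝 ystar) := by
    have h1 : Tendsto (fun k => gradient f (z (φ k)) + e (φ k)) atTop
        (𝓝 (gradient f zh + 0)) := hgrad.add herrφ
    rw [add_zero] at h1
    exact hφconv.sub (h1.const_smul α)
  -- z (φ k + 1) converges to zh
  have hz1 : Tendsto (fun k => z (φ k + 1)) atTop (𝓝 zh) := by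
    have h1 : Tendsto (fun k => z (φ k + 1) - z (φ k)) atTop (𝓝 0) :=
      hΔvec.comp hφtop
    have h2 := hφconv.add h1
    simp only [Function.comp] at h2 ⊢
    convert h2 using 2 with k
    · abel
    · rw [add_zero]
  -- z (φ k + 1) converges to P ystar
  have hz2 : Tendsto (fun k => z (φ k + 1)) atTop (𝓝 (P ystar)) := by
    rw [tendsto_iff_norm_sub_tendsto_zero]
    apply squeeze_zero (fun k => norm_nonneg _)
      (g := fun k => ‖(z (φ k) - α • (gradient f (z (φ k)) + e (φ k))) - ystar‖)
    · intro k
      rw [hiter (φ k)]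
      exact proj_nonexp' hconv hP _ _
    · have := tendsto_iff_norm_sub_tendsto_zero.mp hyconv
      exact this
  exact tendsto_nhds_unique hz1 hz2
end

section
/- For the social-ranking model with communities c_ℓ = ℓ (ℓ = 1,…,C), semi-distance d(c_ℓ,c_m) = |ℓ - m|, binomial prior p_ℓ(γ) = C(C-1, ℓ-1) γ^{ℓ-1}(1-γ)^{C-ℓ}, and the fully relaxed likelihood L_FR(θ,γ) = ∏_{h=1}^{R}(∑_{ℓ,m=1}^{C} p_{h|ℓ,m}(θ) p_ℓ(γ) p_m(γ))^{n^{(h)}}, it holds that L_FR(θ, γ) = L_FR(θ, 1-γ) for all θ > 0 and γ ∈ [0,1]. -/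
/-- Mallows-type score model of the social-ranking set-up:
`p_{h|ℓ,m}(θ) ∝ exp(-(((R-h)/R - |ℓ-m|/C)/θ)²)` (with `h, ℓ, m` zero-indexed,
so the one-indexed score index is `h+1` and `d(c_ℓ,c_m) = |ℓ-m|`). -/
noncomputable def pSocialRank (R C : ℕ) (θ : ℝ) (h : Fin R) (ℓ m : Fin C) : ℝ :=
  Real.exp (-((((R : ℝ) - ((h : ℝ) + 1)) / R - |(ℓ : ℝ) - (m : ℝ)| / C) / θ) ^ 2) /
    ∑ h' : Fin R,
      Real.exp (-((((R : ℝ) - ((h' : ℝ) + 1)) / R - |(ℓ : ℝ) - (m : ℝ)| / C) / θ) ^ 2)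

/-- Binomial prior `p_ℓ(γ) = C(C-1, ℓ) γ^ℓ (1-γ)^(C-1-ℓ)` with `ℓ` zero-indexed. -/
noncomputable def binPrior (C : ℕ) (γ : ℝ) (ℓ : Fin C) : ℝ :=
  (C - 1).choose ℓ * γ ^ (ℓ : ℕ) * (1 - γ) ^ (C - 1 - (ℓ : ℕ))

/-- Fully relaxed likelihood of the social-ranking model. -/
noncomputable def LFRSocialRank (R C : ℕ) (n : Fin R → ℕ) (θ γ : ℝ) : ℝ :=
  ∏ h : Fin R,
    (∑ ℓ : Fin C, ∑ m : Fin C,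
      pSocialRank R C θ h ℓ m * binPrior C γ ℓ * binPrior C γ m) ^ (n h)

lemma rev_cast (C : ℕ) (ℓ : Fin C) : ((ℓ.rev : ℕ) : ℝ) = (C : ℝ) - 1 - (ℓ : ℝ) := by
  have h1 : (ℓ : ℕ) + 1 ≤ C := ℓ.2
  rw [Fin.val_rev]
  push_cast [Nat.cast_sub h1]
  ring

lemma binPrior_rev (C : ℕ) (γ : ℝ) (ℓ : Fin C) :
    binPrior C (1 - γ) ℓ.rev = binPrior C γ ℓ := by
  have hℓ : (ℓ : ℕ) ≤ C - 1 := Nat.le_sub_one_of_lt ℓ.2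
  have hrev : (ℓ.rev : ℕ) = C - 1 - (ℓ : ℕ) := by
    rw [Fin.val_rev]; omega
  unfold binPrior
  rw [hrev, Nat.choose_symm hℓ, sub_sub_cancel,
    show C - 1 - (C - 1 - (ℓ : ℕ)) = (ℓ : ℕ) by omega]
  ring

lemma pSocialRank_rev (R C : ℕ) (θ : ℝ) (h : Fin R) (ℓ m : Fin C) :
    pSocialRank R C θ h ℓ.rev m.rev = pSocialRank R C θ h ℓ m := by
  unfold pSocialRank
  rw [show |((ℓ.rev : ℕ) : ℝ) - ((m.rev : ℕ) : ℝ)| = |(ℓ : ℝ) - (m : ℝ)| by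
    rw [rev_cast, rev_cast, show (C:ℝ) - 1 - ℓ - ((C:ℝ) - 1 - m) = -((ℓ:ℝ) - m) by ring,
      abs_neg]]

theorem stmt_14 (R C : ℕ) (hC : 1 ≤ C) (n : Fin R → ℕ) (θ : ℝ) (hθ : 0 < θ)
    (γ : ℝ) (hγ : γ ∈ Set.Icc (0 : ℝ) 1) :
    LFRSocialRank R C n θ γ = LFRSocialRank R C n θ (1 - γ) := by
  unfold LFRSocialRank
  refine Finset.prod_congr rfl fun h _ => ?_
  congr 1
  refine Fintype.sum_equiv (Fin.revPerm) _ _ fun ℓ => ?_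
  refine Fintype.sum_equiv (Fin.revPerm) _ _ fun m => ?_
  simp only [Fin.revPerm_apply]
  rw [pSocialRank_rev, binPrior_rev, binPrior_rev]
end
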